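/- Let α ∈ (−1/2, 1/2) and γ ∈ [0,1). There exist constants 0 < c ≤ C < ∞, depending only on α and γ, such that for all 0 < s < t < ∞ with s > 2(t−s) one has c · (t−s)^{2α+1} / s^γ ≤ Φ(s,t) ≤ C · (t−s)^{2α+1} / s^γ. -/

import Mathlib

open MeasureTheory
open Set Real


lemma sq_rpow_eq {a : ℝ} (ha : 0 ≤ a) (p : ℝ) : (a ^ p)^2 = a ^ (2*p) := by
  rw [← Real.rpow_natCast (a^p) 2, ← Real.rpow_mul ha]
  norm_num [mul_comm]

lemma mvt_rpow (p : ℝ) (hp : p ≤ 1) {a b : ℝ} (ha : 0 < a) (hab : a ≤ b) :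
    |b ^ p - a ^ p| ≤ |p| * a ^ (p - 1) * (b - a) := by
  have key : ∀ x ∈ Set.Ici a, HasDerivWithinAt (fun x : ℝ => x ^ p)
      ((fun x : ℝ => p * x ^ (p-1)) x) (Set.Ici a) x := fun x hx =>
    (Real.hasDerivAt_rpow_const (Or.inl (ne_of_gt (lt_of_lt_of_le ha hx)))).hasDerivWithinAt
  have bound : ∀ x ∈ Set.Ici a, ‖(fun x : ℝ => p * x ^ (p-1)) x‖ ≤ |p| * a ^ (p - 1) := by
    intro x hx
    rw [Real.norm_eq_abs, abs_mul,
      abs_of_nonneg (Real.rpow_nonneg (le_of_lt (lt_of_lt_of_le ha hx)) _)]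
    exact mul_le_mul_of_nonneg_left
      (Real.rpow_le_rpow_of_nonpos ha hx (by linarith : p - 1 ≤ 0)) (abs_nonneg p)
  have := (convex_Ici a).norm_image_sub_le_of_norm_hasDerivWithin_le key bound
    Set.self_mem_Ici (hab : b ∈ Set.Ici a)
  rw [Real.norm_eq_abs, Real.norm_eq_abs, abs_of_nonneg (sub_nonneg.2 hab)] at this
  exact this

lemma integral_ioo_sub_rpow {a b c r : ℝ} (hab : a ≤ b) (hbc : b ≤ c)
    (hr : -1 < r ∨ (r ≠ -1 ∧ 0 < c - b)) :
    ∫ u in Set.Ioo a b, (c - u) ^ r = ((c-a)^(r+1) - (c-b)^(r+1))/(r+1) := by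
  rw [← MeasureTheory.integral_Ioc_eq_integral_Ioo, ← intervalIntegral.integral_of_le hab,
    intervalIntegral.integral_comp_sub_left (fun v => v ^ r) c,
    integral_rpow]
  rcases hr with h | ⟨h1, h2⟩
  · exact Or.inl h
  · refine Or.inr ⟨h1, ?_⟩
    rw [Set.uIcc_of_le (by linarith)]
    intro h0
    exact absurd (Set.mem_Icc.1 h0).1 (by linarith)

lemma integrableOn_ioo_sub_rpow {a b c r : ℝ} (hr : -1 < r) (hbc : b ≤ c) :
    IntegrableOn (fun u : ℝ => (c - u) ^ r) (Set.Ioo a b) := by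
  have H := (intervalIntegral.intervalIntegrable_rpow' (a := c - b) (b := c - a) hr).comp_sub_left c
  simp only [sub_sub_cancel] at H
  rcases le_or_gt a b with hab | hab
  · exact ((intervalIntegrable_iff_integrableOn_Ioo_of_le hab).1 H.symm)
  · simp [Set.Ioo_eq_empty (by linarith : ¬ a < b)]

lemma aux_h2 (α : ℝ) (hα2 : α < 1/2) {h x : ℝ} (hh : 0 < h) (hx : h ≤ x) :
    h^2 * x^(2*α-1) ≤ h^(2*α+1) := by
  have hx0 : 0 < x := lt_of_lt_of_le hh hx
  have e1 : (h:ℝ)^2 = h^(2*α+1) * h^(1-2*α) := by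
    rw [← Real.rpow_add hh, show 2*α+1+(1-2*α) = ((2:ℕ):ℝ) by push_cast; ring,
      Real.rpow_natCast]
  rw [e1, mul_assoc]
  have e2 : x^(2*α-1) = (x^(1-2*α))⁻¹ := by
    rw [show 2*α-1 = -(1-2*α) by ring, Real.rpow_neg hx0.le]
  have e3 : h^(1-2*α) ≤ x^(1-2*α) := Real.rpow_le_rpow hh.le hx (by linarith)
  have e4 : h^(1-2*α) * x^(2*α-1) ≤ 1 := by
    rw [e2]
    calc h^(1-2*α) * (x^(1-2*α))⁻¹ ≤ x^(1-2*α) * (x^(1-2*α))⁻¹ := by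
          apply mul_le_mul_of_nonneg_right e3 (by positivity)
      _ = 1 := mul_inv_cancel₀ (by positivity)
  calc h^(2*α+1) * (h^(1-2*α) * x^(2*α-1)) ≤ h^(2*α+1) * 1 := by
        apply mul_le_mul_of_nonneg_left e4 (by positivity)
    _ = h^(2*α+1) := mul_one _

lemma sq_diff_le (α : ℝ) (hα : α ≤ 1) {v h : ℝ} (hv : 0 < v) (hh : 0 ≤ h) :
    ((v+h)^α - v^α)^2 ≤ α^2 * v^(2*α-2) * h^2 := by
  have := mvt_rpow α hα hv (by linarith : v ≤ v + h)
  have h2 : ((v+h)^α - v^α)^2 = |(v+h)^α - v^α|^2 := (sq_abs _).symm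
  rw [h2]
  calc |(v+h)^α - v^α|^2 ≤ (|α| * v^(α-1) * (v + h - v))^2 := by
        apply pow_le_pow_left₀ (abs_nonneg _) this
    _ = α^2 * (v^(α-1))^2 * h^2 := by rw [mul_pow, mul_pow, sq_abs]; ring_nf
    _ = α^2 * v^(2*α-2) * h^2 := by
        rw [sq_rpow_eq hv.le]; ring_nf


/-- The second-moment function
`Φ(s,t) = ∫₀^s ((t-u)^α - (s-u)^α)² u^{-γ} du + ∫_s^t (t-u)^{2α} u^{-γ} du`,
which equals `E[(Z(t)-Z(s))²]` for the generalized Riemann–Liouville FBM `Z`. -/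
noncomputable def Phi (α γ s t : ℝ) : ℝ :=
  (∫ u in Set.Ioo (0:ℝ) s, ((t-u) ^ α - (s-u) ^ α)^2 * u ^ (-γ)) +
    ∫ u in Set.Ioo s t, (t-u) ^ (2*α) * u ^ (-γ)

set_option maxHeartbeats 1000000 in
/-- For `α ∈ (-1/2,1/2)`: `Φ(s,t) ≍ (t-s)^{2α+1}/s^γ` when `s > 2(t-s)`. -/
theorem Z_increment_bound_away (α γ : ℝ)
    (hα1 : -(1/2) < α) (hα2 : α < 1/2) (hγ0 : 0 ≤ γ) (hγ1 : γ < 1) :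
    ∃ c C : ℝ, 0 < c ∧ c ≤ C ∧
      ∀ s t : ℝ, 0 < s → s < t → 2*(t-s) < s →
        c * (t-s) ^ (2*α+1) / s ^ γ ≤ Phi α γ s t ∧
        Phi α γ s t ≤ C * (t-s) ^ (2*α+1) / s ^ γ := by
  have h2a1 : 0 < 2*α+1 := by linarith
  have h1g : 0 < 1-γ := by linarith
  have h12a : 0 < 1-2*α := by linarith
  refine ⟨(2/3) / (2*α+1),
    1/(2*α+1) + 1/(2*(1-γ)) + 1/(2*(1-2*α)) + (4 + 2/(2*α+1)), by positivity, ?_, ?_⟩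
  · have e1 : (2/3)/(2*α+1) ≤ 1/(2*α+1) := by
      gcongr
      norm_num
    have e2 : 0 ≤ 1/(2*(1-γ)) := by positivity
    have e3 : 0 ≤ 1/(2*(1-2*α)) := by positivity
    have e4 : 0 ≤ 4 + 2/(2*α+1) := by positivity
    linarith
  intro s t hs hst hcl
  have hh : 0 < t - s := by linarith
  have ht : 0 < t := by linarith
  have hhs : t - s < s/2 := by linarith
  have hγ' : (-1:ℝ) < -γ := by linarith
  set A := (t-s)^(2*α+1) with hA_def
  set S := s^(-γ) with hS_def
  have hS : 0 < S := Real.rpow_pos_of_pos hs _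
  have hA : 0 < A := Real.rpow_pos_of_pos hh _
  have hdiv : ∀ k : ℝ, k * A / s^γ = k * (A * S) := by
    intro k; rw [hS_def, Real.rpow_neg hs.le]; ring
  -- J facts
  have hJg_int : IntegrableOn (fun u : ℝ => (t-u)^(2*α)) (Set.Ioo s t) :=
    integrableOn_ioo_sub_rpow (by linarith) le_rfl
  have hf2_meas : Measurable (fun u : ℝ => (t-u)^(2*α) * u^(-γ)) := by fun_prop
  have hJ_int : IntegrableOn (fun u : ℝ => (t-u)^(2*α) * u^(-γ)) (Set.Ioo s t) := by
    apply Integrable.mono' (hJg_int.const_mul S) hf2_meas.aestronglyMeasurable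
    refine (ae_restrict_iff' measurableSet_Ioo).2 (ae_of_all _ fun u hu => ?_)
    have hu0 : 0 < u := lt_trans hs hu.1
    rw [Real.norm_eq_abs, abs_of_nonneg (mul_nonneg (Real.rpow_nonneg (by linarith [hu.2]) _)
      (Real.rpow_nonneg hu0.le _))]
    calc (t-u)^(2*α) * u^(-γ) = u^(-γ) * (t-u)^(2*α) := mul_comm _ _
      _ ≤ S * (t-u)^(2*α) := mul_le_mul_of_nonneg_right
          (Real.rpow_le_rpow_of_nonpos hs hu.1.le (neg_nonpos.2 hγ0))
          (Real.rpow_nonneg (by linarith [hu.2] : (0:ℝ) ≤ t - u) _)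
  have hJg_val : ∫ u in Set.Ioo s t, (t-u)^(2*α) = A / (2*α+1) := by
    have := integral_ioo_sub_rpow (a:=s) (b:=t) (c:=t) (r:=2*α) hst.le le_rfl (Or.inl (by linarith))
    simpa [sub_self, Real.zero_rpow (show 2*α+1 ≠ 0 by linarith)] using this
  have hI_nonneg : 0 ≤ ∫ u in Set.Ioo (0:ℝ) s, ((t-u) ^ α - (s-u) ^ α)^2 * u ^ (-γ) :=
    setIntegral_nonneg measurableSet_Ioo fun u hu =>
      mul_nonneg (sq_nonneg _) (Real.rpow_nonneg hu.1.le _)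
  constructor
  · -- lower bound
    rw [hdiv]
    have hJ_low : t^(-γ) * (A / (2*α+1)) ≤ ∫ u in Set.Ioo s t, (t-u)^(2*α) * u^(-γ) := by
      have e : ∫ u in Set.Ioo s t, t^(-γ) * (t-u)^(2*α) = t^(-γ) * (A/(2*α+1)) := by
        rw [MeasureTheory.integral_const_mul, hJg_val]
      rw [← e]
      apply setIntegral_mono_on (hJg_int.const_mul _) hJ_int measurableSet_Ioo
      intro u hu
      have hu0 : 0 < u := lt_trans hs hu.1
      calc t^(-γ) * (t-u)^(2*α) ≤ u^(-γ) * (t-u)^(2*α) := mul_le_mul_of_nonneg_right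
            (Real.rpow_le_rpow_of_nonpos hu0 hu.2.le (neg_nonpos.2 hγ0))
            (Real.rpow_nonneg (by linarith [hu.2] : (0:ℝ) ≤ t - u) _)
        _ = (t-u)^(2*α) * u^(-γ) := mul_comm _ _
    have hts : (2/3) * S ≤ t^(-γ) := by
      calc (2/3) * S = (3/2)^(-(1:ℝ)) * S := by norm_num [Real.rpow_neg_one]
        _ ≤ (3/2)^(-γ) * S := by
            apply mul_le_mul_of_nonneg_right ?_ hS.le
            exact Real.rpow_le_rpow_of_exponent_le (by norm_num) (by linarith)
        _ = (3/2*s)^(-γ) := by rw [hS_def, ← Real.mul_rpow (by norm_num) hs.le]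
        _ ≤ t^(-γ) := Real.rpow_le_rpow_of_nonpos ht (by linarith) (by linarith)
    calc (2/3)/(2*α+1) * (A * S) = ((2/3) * S) * (A/(2*α+1)) := by ring
      _ ≤ t^(-γ) * (A/(2*α+1)) := by
          apply mul_le_mul_of_nonneg_right hts (by positivity)
      _ ≤ ∫ u in Set.Ioo s t, (t-u)^(2*α) * u^(-γ) := hJ_low
      _ ≤ Phi α γ s t := by rw [Phi]; linarith [hI_nonneg]
  · -- upper bound
    rw [hdiv]
    have hαle1 : α ≤ 1 := by linarith
    have hαsq : α^2 ≤ 1/4 := by nlinarith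
    have hf_meas : Measurable (fun u : ℝ => ((t-u) ^ α - (s-u) ^ α)^2 * u ^ (-γ)) := by fun_prop
    have hs2S : (s/2:ℝ)^(-γ) ≤ 2*S := by
      have e : (s/2:ℝ)^(-γ) = 2^γ * S := by
        rw [hS_def, show (s/2:ℝ) = s * 2⁻¹ by ring, Real.mul_rpow hs.le (by norm_num),
          Real.inv_rpow (by norm_num), ← Real.rpow_neg (by norm_num), neg_neg, mul_comm]
      rw [e]
      apply mul_le_mul_of_nonneg_right ?_ hS.le
      calc (2:ℝ)^γ ≤ 2^(1:ℝ) := Real.rpow_le_rpow_of_exponent_le one_le_two hγ1.le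
        _ = 2 := Real.rpow_one 2
    have huS : ∀ u : ℝ, s/2 ≤ u → u^(-γ) ≤ 2*S := fun u hu =>
      le_trans (Real.rpow_le_rpow_of_nonpos (by linarith) hu (neg_nonpos.2 hγ0)) hs2S
    have hs2 : s/2 < s - (t-s) := by linarith
    have hs3 : s - (t-s) < s := by linarith
    -- pointwise bounds
    have hb1 : ∀ u ∈ Set.Ioo (0:ℝ) (s/2), ((t-u) ^ α - (s-u) ^ α)^2 * u ^ (-γ)
        ≤ (α^2 * (s/2)^(2*α-2) * (t-s)^2) * u^(-γ) := by
      intro u hu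
      obtain ⟨hu1, hu2⟩ := hu
      apply mul_le_mul_of_nonneg_right ?_ (Real.rpow_nonneg hu1.le _)
      have hv : 0 < s - u := by linarith
      have key := sq_diff_le α hαle1 hv hh.le
      rw [show s - u + (t - s) = t - u by ring] at key
      calc ((t-u) ^ α - (s-u) ^ α)^2 ≤ α^2 * (s-u)^(2*α-2) * (t-s)^2 := key
        _ ≤ α^2 * (s/2)^(2*α-2) * (t-s)^2 := by
            apply mul_le_mul_of_nonneg_right ?_ (sq_nonneg _)
            apply mul_le_mul_of_nonneg_left ?_ (sq_nonneg α)
            exact Real.rpow_le_rpow_of_nonpos (by linarith) (by linarith) (by linarith)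
    have hb2 : ∀ u ∈ Set.Ioo (s/2) (s-(t-s)), ((t-u) ^ α - (s-u) ^ α)^2 * u ^ (-γ)
        ≤ (2*S*α^2*(t-s)^2) * (s-u)^(2*α-2) := by
      intro u hu
      obtain ⟨hu1, hu2⟩ := hu
      have hv : 0 < s - u := by linarith
      have key := sq_diff_le α hαle1 hv hh.le
      rw [show s - u + (t - s) = t - u by ring] at key
      calc ((t-u) ^ α - (s-u) ^ α)^2 * u ^ (-γ)
          ≤ (α^2 * (s-u)^(2*α-2) * (t-s)^2) * (2*S) := by
            apply mul_le_mul key (huS u hu1.le) (Real.rpow_nonneg (by linarith : (0:ℝ) ≤ u) _)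
            exact mul_nonneg (mul_nonneg (sq_nonneg _) (Real.rpow_nonneg hv.le _)) (sq_nonneg _)
        _ = (2*S*α^2*(t-s)^2) * (s-u)^(2*α-2) := by ring
    have hb3 : ∀ u ∈ Set.Ioo (s-(t-s)) s, ((t-u) ^ α - (s-u) ^ α)^2 * u ^ (-γ)
        ≤ 2*S * ((2*(t-s))^(2*α) + (s-u)^(2*α)) := by
      intro u hu
      obtain ⟨hu1, hu2⟩ := hu
      have hv : 0 < s - u := by linarith
      have htu : 0 < t - u := by linarith
      have hsq : ((t-u)^α - (s-u)^α)^2 ≤ (2*(t-s))^(2*α) + (s-u)^(2*α) := by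
        rcases le_or_gt 0 α with hα0 | hα0
        · have h1 : (0:ℝ) ≤ (s-u)^α := Real.rpow_nonneg hv.le _
          have h2 : (t-u)^α ≤ (2*(t-s))^α := Real.rpow_le_rpow htu.le (by linarith) hα0
          have h3 : (s-u)^α ≤ (t-u)^α := Real.rpow_le_rpow hv.le (by linarith) hα0
          have hb : (0:ℝ) ≤ (2*(t-s))^α := Real.rpow_nonneg (by linarith) _
          have h4 : ((t-u)^α - (s-u)^α)^2 ≤ ((2*(t-s))^α)^2 := by
            apply sq_le_sq' (by linarith) (by linarith)
          calc ((t-u)^α - (s-u)^α)^2 ≤ ((2*(t-s))^α)^2 := h4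
            _ = (2*(t-s))^(2*α) := sq_rpow_eq (by linarith) α
            _ ≤ (2*(t-s))^(2*α) + (s-u)^(2*α) := by
                linarith [Real.rpow_nonneg hv.le (2*α)]
        · have h1 : (0:ℝ) ≤ (t-u)^α := Real.rpow_nonneg htu.le _
          have h2 : (t-u)^α ≤ (s-u)^α := Real.rpow_le_rpow_of_nonpos hv (by linarith) hα0.le
          have hb : (0:ℝ) ≤ (s-u)^α := Real.rpow_nonneg hv.le _
          have h4 : ((t-u)^α - (s-u)^α)^2 ≤ ((s-u)^α)^2 := by
            apply sq_le_sq' (by linarith) (by linarith)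
          calc ((t-u)^α - (s-u)^α)^2 ≤ ((s-u)^α)^2 := h4
            _ = (s-u)^(2*α) := sq_rpow_eq hv.le α
            _ ≤ (2*(t-s))^(2*α) + (s-u)^(2*α) := by
                linarith [Real.rpow_nonneg (show (0:ℝ) ≤ 2*(t-s) by linarith) (2*α)]
      calc ((t-u)^α - (s-u)^α)^2 * u^(-γ)
          ≤ ((2*(t-s))^(2*α) + (s-u)^(2*α)) * (2*S) := by
            apply mul_le_mul hsq (huS u (by linarith)) (Real.rpow_nonneg (by linarith : (0:ℝ) ≤ u) _)
            exact add_nonneg (Real.rpow_nonneg (by linarith) _) (Real.rpow_nonneg hv.le _)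
        _ = 2*S * ((2*(t-s))^(2*α) + (s-u)^(2*α)) := mul_comm _ _
    -- integrability of dominating functions
    have hγ_int : IntegrableOn (fun u : ℝ => u^(-γ)) (Set.Ioo (0:ℝ) (s/2)) :=
      (intervalIntegrable_iff_integrableOn_Ioo_of_le (by linarith)).1
        (intervalIntegral.intervalIntegrable_rpow' hγ')
    have hg1_int : IntegrableOn (fun u : ℝ => (α^2 * (s/2)^(2*α-2) * (t-s)^2) * u^(-γ))
        (Set.Ioo (0:ℝ) (s/2)) := hγ_int.const_mul _
    have hg2r_int : IntegrableOn (fun u : ℝ => (s-u)^(2*α-2)) (Set.Ioo (s/2) (s-(t-s))) := by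
      apply (ContinuousOn.integrableOn_Icc ?_).mono_set Set.Ioo_subset_Icc_self
      apply ContinuousOn.rpow_const (by fun_prop)
      intro x hx
      exact Or.inl (ne_of_gt (by linarith [hx.2, Set.mem_Icc.1 hx |>.2] : (0:ℝ) < s - x))
    have hg2_int : IntegrableOn (fun u : ℝ => (2*S*α^2*(t-s)^2) * (s-u)^(2*α-2))
        (Set.Ioo (s/2) (s-(t-s))) := hg2r_int.const_mul _
    have hg3_int : IntegrableOn (fun u : ℝ => 2*S * ((2*(t-s))^(2*α) + (s-u)^(2*α)))
        (Set.Ioo (s-(t-s)) s) := by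
      apply Integrable.const_mul
      exact (integrableOn_const measure_Ioo_lt_top.ne).add
        (integrableOn_ioo_sub_rpow (by linarith) le_rfl)
    -- integrability of f on pieces
    have hfi : ∀ (a b : ℝ) (g : ℝ → ℝ), IntegrableOn g (Set.Ioo a b) →
        (∀ u ∈ Set.Ioo a b, 0 < u) →
        (∀ u ∈ Set.Ioo a b, ((t-u) ^ α - (s-u) ^ α)^2 * u ^ (-γ) ≤ g u) →
        IntegrableOn (fun u : ℝ => ((t-u) ^ α - (s-u) ^ α)^2 * u ^ (-γ)) (Set.Ioo a b) := by
      intro a b g hg hpos hbd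
      apply Integrable.mono' hg hf_meas.aestronglyMeasurable
      refine (ae_restrict_iff' measurableSet_Ioo).2 (ae_of_all _ fun u hu => ?_)
      rw [Real.norm_eq_abs, abs_of_nonneg (mul_nonneg (sq_nonneg _)
        (Real.rpow_nonneg (hpos u hu).le _))]
      exact hbd u hu
    have hfi1 := hfi 0 (s/2) _ hg1_int (fun u hu => hu.1) hb1
    have hfi2 := hfi (s/2) (s-(t-s)) _ hg2_int (fun u hu => by linarith [hu.1]) hb2
    have hfi3 := hfi (s-(t-s)) s _ hg3_int (fun u hu => by linarith [hu.1]) hb3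
    -- values of dominating integrals
    have hγ_val : ∫ u in Set.Ioo (0:ℝ) (s/2), u^(-γ) = (s/2)^(-γ+1)/(-γ+1) := by
      rw [← MeasureTheory.integral_Ioc_eq_integral_Ioo,
        ← intervalIntegral.integral_of_le (by linarith : (0:ℝ) ≤ s/2),
        integral_rpow (Or.inl hγ'), Real.zero_rpow (by linarith : -γ+1 ≠ 0), sub_zero]
    have hval2 : ∫ u in Set.Ioo (s/2) (s-(t-s)), (s-u)^(2*α-2)
        = ((s/2)^(2*α-1) - (t-s)^(2*α-1))/(2*α-1) := by
      rw [integral_ioo_sub_rpow (r := 2*α-2) hs2.le (by linarith)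
        (Or.inr ⟨by intro hc; linarith, by linarith⟩)]
      rw [show s - s/2 = s/2 by ring, show s - (s-(t-s)) = t-s by ring,
        show 2*α-2+1 = 2*α-1 by ring]
    have hval3 : ∫ u in Set.Ioo (s-(t-s)) s, ((2*(t-s))^(2*α) + (s-u)^(2*α))
        = (2*(t-s))^(2*α) * (t-s) + A/(2*α+1) := by
      rw [MeasureTheory.integral_add (integrableOn_const (C := (2*(t-s))^(2*α)) measure_Ioo_lt_top.ne)
        (integrableOn_ioo_sub_rpow (r := 2*α) (by linarith) le_rfl)]
      congr 1
      · rw [MeasureTheory.setIntegral_const, MeasureTheory.measureReal_def, Real.volume_Ioo, smul_eq_mul,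
          ENNReal.toReal_ofReal (by linarith : (0:ℝ) ≤ s - (s-(t-s))),
          show s - (s-(t-s)) = t-s by ring]
        ring
      · rw [integral_ioo_sub_rpow (r := 2*α) hs3.le le_rfl (Or.inl (by linarith)),
          sub_self, Real.zero_rpow (by linarith : 2*α+1 ≠ 0),
          show s - (s-(t-s)) = t-s by ring, sub_zero]
    -- piece bounds
    have hP1 : ∫ u in Set.Ioo (0:ℝ) (s/2), ((t-u) ^ α - (s-u) ^ α)^2 * u ^ (-γ)
        ≤ 1/(2*(1-γ)) * (A*S) := by
      have e1 : (s/2:ℝ)^(2*α-2) * (s/2)^(-γ+1) = ((s/2:ℝ)^(2*α-1)) * ((s/2:ℝ)^(-γ)) := by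
        rw [← Real.rpow_add (by linarith), ← Real.rpow_add (by linarith)]
        congr 1
        ring
      have e2 : (t-s)^2 * (s/2)^(2*α-1) ≤ A := aux_h2 α hα2 hh hhs.le
      have eX : (t-s)^2 * ((s/2)^(2*α-2) * (s/2)^(-γ+1)) ≤ 2*(A*S) := by
        rw [e1, ← mul_assoc]
        calc (t-s)^2 * (s/2)^(2*α-1) * (s/2)^(-γ) ≤ A * (2*S) :=
              mul_le_mul e2 hs2S (Real.rpow_nonneg (by linarith) _) hA.le
          _ = 2*(A*S) := by ring
      calc ∫ u in Set.Ioo (0:ℝ) (s/2), ((t-u) ^ α - (s-u) ^ α)^2 * u ^ (-γ)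
          ≤ ∫ u in Set.Ioo (0:ℝ) (s/2), (α^2 * (s/2)^(2*α-2) * (t-s)^2) * u^(-γ) :=
            setIntegral_mono_on hfi1 hg1_int measurableSet_Ioo hb1
        _ = (α^2 * (s/2)^(2*α-2) * (t-s)^2) * ((s/2)^(-γ+1)/(-γ+1)) := by
            rw [MeasureTheory.integral_const_mul, hγ_val]
        _ = α^2 * ((t-s)^2 * ((s/2)^(2*α-2) * (s/2)^(-γ+1))) * (1/(-γ+1)) := by ring
        _ ≤ (1/4) * (2*(A*S)) * (1/(-γ+1)) := by
            apply mul_le_mul_of_nonneg_right ?_ (one_div_nonneg.2 (by linarith))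
            apply mul_le_mul hαsq eX ?_ (by norm_num)
            exact mul_nonneg (sq_nonneg _) (mul_nonneg (Real.rpow_nonneg (by linarith) _)
              (Real.rpow_nonneg (by linarith) _))
        _ = 1/(2*(1-γ)) * (A*S) := by
            rw [show -γ+1 = 1-γ by ring]
            have : (1-γ) ≠ 0 := by intro hc; linarith
            field_simp
            ring
    have hP2 : ∫ u in Set.Ioo (s/2) (s-(t-s)), ((t-u) ^ α - (s-u) ^ α)^2 * u ^ (-γ)
        ≤ 1/(2*(1-2*α)) * (A*S) := by
      have hXnn : (0:ℝ) ≤ (s/2)^(2*α-1) := Real.rpow_nonneg (by linarith) _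
      have hYnn : (0:ℝ) ≤ (t-s)^(2*α-1) := Real.rpow_nonneg hh.le _
      have hne1 : (2*α-1) ≠ 0 := by intro hc; linarith
      have hne2 : (1-2*α) ≠ 0 := by intro hc; linarith
      have ediv : ((s/2)^(2*α-1) - (t-s)^(2*α-1))/(2*α-1)
          = ((t-s)^(2*α-1) - (s/2)^(2*α-1))/(1-2*α) := by
        field_simp
        ring
      have e2 : (t-s)^2 * (t-s)^(2*α-1) ≤ A := aux_h2 α hα2 hh le_rfl
      calc ∫ u in Set.Ioo (s/2) (s-(t-s)), ((t-u) ^ α - (s-u) ^ α)^2 * u ^ (-γ)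
          ≤ ∫ u in Set.Ioo (s/2) (s-(t-s)), (2*S*α^2*(t-s)^2) * (s-u)^(2*α-2) :=
            setIntegral_mono_on hfi2 hg2_int measurableSet_Ioo hb2
        _ = (2*S*α^2*(t-s)^2) * (((s/2)^(2*α-1) - (t-s)^(2*α-1))/(2*α-1)) := by
            rw [MeasureTheory.integral_const_mul, hval2]
        _ ≤ (2*S*α^2*(t-s)^2) * ((t-s)^(2*α-1)/(1-2*α)) := by
            apply mul_le_mul_of_nonneg_left ?_ ?_
            · rw [ediv, div_eq_mul_inv, div_eq_mul_inv]
              have hnum : (t-s)^(2*α-1) - (s/2)^(2*α-1) ≤ (t-s)^(2*α-1) := by linarith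
              exact mul_le_mul_of_nonneg_right hnum (inv_nonneg.2 h12a.le)
            · exact mul_nonneg (mul_nonneg (mul_nonneg (by norm_num : (0:ℝ) ≤ 2) hS.le)
                (sq_nonneg α)) (sq_nonneg _)
        _ = (α^2 * ((t-s)^2*(t-s)^(2*α-1))) * (2*S*(1/(1-2*α))) := by ring
        _ ≤ ((1/4) * A) * (2*S*(1/(1-2*α))) := by
            apply mul_le_mul_of_nonneg_right ?_ ?_
            · exact mul_le_mul hαsq e2 (mul_nonneg (sq_nonneg _) hYnn) (by norm_num)
            · exact mul_nonneg (by linarith [hS] : (0:ℝ) ≤ 2*S) (one_div_nonneg.2 h12a.le)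
        _ = 1/(2*(1-2*α)) * (A*S) := by
            field_simp
            ring
    have hP3 : ∫ u in Set.Ioo (s-(t-s)) s, ((t-u) ^ α - (s-u) ^ α)^2 * u ^ (-γ)
        ≤ (4 + 2/(2*α+1)) * (A*S) := by
      have e : (2*(t-s))^(2*α)*(t-s) ≤ 2*A := by
        rw [Real.mul_rpow (by norm_num) hh.le]
        calc 2^(2*α) * (t-s)^(2*α) * (t-s) = 2^(2*α) * ((t-s)^(2*α) * (t-s)^(1:ℝ)) := by
              rw [Real.rpow_one]; ring
          _ = 2^(2*α) * (t-s)^(2*α+1) := by rw [← Real.rpow_add hh]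
          _ ≤ 2 * A := by
              apply mul_le_mul_of_nonneg_right ?_ hA.le
              calc (2:ℝ)^(2*α) ≤ 2^(1:ℝ) :=
                    Real.rpow_le_rpow_of_exponent_le one_le_two (by linarith)
                _ = 2 := Real.rpow_one 2
      calc ∫ u in Set.Ioo (s-(t-s)) s, ((t-u) ^ α - (s-u) ^ α)^2 * u ^ (-γ)
          ≤ ∫ u in Set.Ioo (s-(t-s)) s, 2*S * ((2*(t-s))^(2*α) + (s-u)^(2*α)) :=
            setIntegral_mono_on hfi3 hg3_int measurableSet_Ioo hb3
        _ = 2*S * ((2*(t-s))^(2*α)*(t-s) + A/(2*α+1)) := by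
            rw [MeasureTheory.integral_const_mul, hval3]
        _ ≤ 2*S * (2*A + A/(2*α+1)) := by
            apply mul_le_mul_of_nonneg_left (by linarith) (by linarith [hS] : (0:ℝ) ≤ 2*S)
        _ = (4 + 2/(2*α+1)) * (A*S) := by
            field_simp
            ring
    -- splitting
    have c0 : ∀ (g : ℝ → ℝ) (a b : ℝ), a ≤ b →
        (∫ u in a..b, g u) = ∫ u in Set.Ioo a b, g u := by
      intro g a b hab
      rw [intervalIntegral.integral_of_le hab, MeasureTheory.integral_Ioc_eq_integral_Ioo]
    have i1 : IntervalIntegrable (fun u : ℝ => ((t-u) ^ α - (s-u) ^ α)^2 * u ^ (-γ))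
        volume 0 (s/2) :=
      (intervalIntegrable_iff_integrableOn_Ioo_of_le (by linarith)).2 hfi1
    have i2 : IntervalIntegrable (fun u : ℝ => ((t-u) ^ α - (s-u) ^ α)^2 * u ^ (-γ))
        volume (s/2) (s-(t-s)) :=
      (intervalIntegrable_iff_integrableOn_Ioo_of_le hs2.le).2 hfi2
    have i3 : IntervalIntegrable (fun u : ℝ => ((t-u) ^ α - (s-u) ^ α)^2 * u ^ (-γ))
        volume (s-(t-s)) s :=
      (intervalIntegrable_iff_integrableOn_Ioo_of_le hs3.le).2 hfi3
    have e12 := intervalIntegral.integral_add_adjacent_intervals i1 i2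
    have e123 := intervalIntegral.integral_add_adjacent_intervals (i1.trans i2) i3
    have hsplit : (∫ u in Set.Ioo (0:ℝ) s, ((t-u) ^ α - (s-u) ^ α)^2 * u ^ (-γ))
        = (∫ u in Set.Ioo (0:ℝ) (s/2), ((t-u) ^ α - (s-u) ^ α)^2 * u ^ (-γ))
          + (∫ u in Set.Ioo (s/2) (s-(t-s)), ((t-u) ^ α - (s-u) ^ α)^2 * u ^ (-γ))
          + (∫ u in Set.Ioo (s-(t-s)) s, ((t-u) ^ α - (s-u) ^ α)^2 * u ^ (-γ)) := by
      rw [← c0 _ 0 s (by linarith), ← e123, ← e12,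
        c0 _ 0 (s/2) (by linarith), c0 _ (s/2) (s-(t-s)) hs2.le, c0 _ (s-(t-s)) s hs3.le]
    -- J upper bound
    have hJ_up : ∫ u in Set.Ioo s t, (t-u)^(2*α) * u^(-γ) ≤ 1/(2*α+1) * (A*S) := by
      calc ∫ u in Set.Ioo s t, (t-u)^(2*α) * u^(-γ)
          ≤ ∫ u in Set.Ioo s t, S * (t-u)^(2*α) := by
            apply setIntegral_mono_on hJ_int (hJg_int.const_mul S) measurableSet_Ioo
            intro u hu
            calc (t-u)^(2*α) * u^(-γ) = u^(-γ) * (t-u)^(2*α) := mul_comm _ _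
              _ ≤ S * (t-u)^(2*α) := mul_le_mul_of_nonneg_right
                  (Real.rpow_le_rpow_of_nonpos hs hu.1.le (neg_nonpos.2 hγ0))
                  (Real.rpow_nonneg (by linarith [hu.2] : (0:ℝ) ≤ t - u) _)
        _ = S * (A/(2*α+1)) := by rw [MeasureTheory.integral_const_mul, hJg_val]
        _ = 1/(2*α+1) * (A*S) := by field_simp
    have expand : (1/(2*α+1) + 1/(2*(1-γ)) + 1/(2*(1-2*α)) + (4 + 2/(2*α+1))) * (A*S)
        = 1/(2*(1-γ)) * (A*S) + 1/(2*(1-2*α)) * (A*S) + (4 + 2/(2*α+1)) * (A*S)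
          + 1/(2*α+1) * (A*S) := by ring
    rw [Phi, hsplit, expand]
    linarith [hP1, hP2, hP3, hJ_up]
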